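/- Every natural number belongs to N_{p/q}; i.e., for every m ∈ ℕ there exists a word u over A_p with val(u) = m. -/
import Mathlib

/-- Base-p/q evaluation of a word over the digit alphabet, given as a list of
digits with the least-significant digit first:
`pqVal p q [a0, a1, ..., ak] = Σ (a_i / q) * (p/q)^i`. -/
def pqVal (p q : ℕ) : List ℕ → ℚ
  | [] => 0
  | a :: u => (a : ℚ) / q + ((p : ℚ) / q) * pqVal p q u

/-- `N_{p/q}`: the set of values of words over `A_p = {0, ..., p-1}`. -/
def pqSet (p q : ℕ) : Set ℚ :=
  {x | ∃ u : List ℕ, (∀ a ∈ u, a < p) ∧ pqVal p q u = x}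


/-- every natural number belongs to N_{p/q}. -/
theorem stmt_4 (p q : ℕ) (hq : 1 < q) (hpq : q < p) (hcop : Nat.Coprime p q)
    (m : ℕ) :
    (m : ℚ) ∈ pqSet p q := by
  have hp0 : 0 < p := lt_trans (lt_trans one_pos hq) hpq
  have hqQ : (q : ℚ) ≠ 0 := by positivity
  induction m using Nat.strong_induction_on with
  | _ m ih =>
    rcases Nat.eq_zero_or_pos m with rfl | hm
    · exact ⟨[], by simp, by simp [pqVal]⟩
    · set n := q * m / p with hn
      set a := q * m % p with ha
      have hdiv : q * m = p * n + a := (Nat.div_add_mod (q * m) p).symm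
      have hnm : n < m := by
        rw [hn, Nat.div_lt_iff_lt_mul hp0]
        calc q * m < p * m := by exact Nat.mul_lt_mul_of_lt_of_le hpq (le_refl m) hm
          _ = m * p := Nat.mul_comm p m
      obtain ⟨u, hu, hval⟩ := ih n hnm
      refine ⟨a :: u, ?_, ?_⟩
      · intro b hb
        rcases List.mem_cons.mp hb with rfl | hb
        · exact Nat.mod_lt _ hp0
        · exact hu b hb
      · have : (q : ℚ) * m = p * n + a := by exact_mod_cast congrArg (Nat.cast : ℕ → ℚ) hdiv
        simp only [pqVal, hval]
        field_simp
        linarith
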